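/- Let λ ≥ μ ≥ 0 be real numbers. Then for all t ≥ 0: ∫₀^t (1+t−s)^{−λ}(1+s)^{−μ} ds ≤ C_{λ,μ}(t)·(1+t)^{−ρ}, where ρ = min{λ+μ−1, μ}, and where C_{λ,μ}(t) = C for a constant C depending only on λ and μ if λ ≠ 1, while C_{λ,μ}(t) = C·log(2+t) if λ = 1. -/

import Mathlib

open MeasureTheory

section helpers
open Real Set


lemma integ1 (t α : ℝ) : IntegrableOn (fun s => (1+s)^(-α)) (Set.Icc (0:ℝ) t) := by
  apply ContinuousOn.integrableOn_compact isCompact_Icc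
  apply ContinuousOn.rpow_const (by fun_prop)
  intro x hx; left; have := hx.1; nlinarith

lemma integ2 (t lam mu : ℝ) :
    IntegrableOn (fun s => (1+t-s)^(-lam) * (1+s)^(-mu)) (Set.Icc (0:ℝ) t) := by
  apply ContinuousOn.integrableOn_compact isCompact_Icc
  apply ContinuousOn.mul
  · apply ContinuousOn.rpow_const (by fun_prop)
    intro x hx; left; have := hx.2; nlinarith
  · apply ContinuousOn.rpow_const (by fun_prop)
    intro x hx; left; have := hx.1; nlinarith

lemma int_eq (t α : ℝ) (ht : 0 ≤ t) (hα : α ≠ 1) :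
    ∫ s in Set.Icc (0:ℝ) t, (1+s)^(-α) = ((1+t)^(1-α) - 1)/(1-α) := by
  rw [MeasureTheory.integral_Icc_eq_integral_Ioc, ← intervalIntegral.integral_of_le ht]
  rw [show (fun s : ℝ => (1+s)^(-α)) = (fun s => (fun x : ℝ => x ^ (-α)) (1 + s)) from rfl]
  rw [intervalIntegral.integral_comp_add_left (fun x : ℝ => x ^ (-α)) 1]
  rw [integral_rpow]
  · rw [show -α + 1 = 1 - α by ring]; norm_num
  · right
    constructor
    · intro h; apply hα; linarith [neg_injective h]
    · intro h
      rw [Set.mem_uIcc] at h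
      rcases h with h | h <;> linarith [h.1, h.2]

lemma int_eq_log (t : ℝ) (ht : 0 ≤ t) :
    ∫ s in Set.Icc (0:ℝ) t, (1+s)^(-(1:ℝ)) = Real.log (1+t) := by
  rw [MeasureTheory.integral_Icc_eq_integral_Ioc, ← intervalIntegral.integral_of_le ht]
  rw [show (fun s : ℝ => (1+s)^(-(1:ℝ))) = (fun s => (fun x : ℝ => x ^ (-(1:ℝ))) (1 + s)) from rfl]
  rw [intervalIntegral.integral_comp_add_left (fun x : ℝ => x ^ (-(1:ℝ))) 1]
  norm_num
  have : ∀ x ∈ Set.uIcc (1:ℝ) (1+t), x ^ (-(1:ℝ)) = 1/x := by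
    intro x hx; rw [Real.rpow_neg_one]; simp
  rw [intervalIntegral.integral_congr this, integral_one_div]
  · simp
  · intro h; rw [Set.mem_uIcc] at h; rcases h with h | h <;> linarith [h.1, h.2]

lemma reflect (t lam : ℝ) (ht : 0 ≤ t) :
    ∫ s in Set.Icc (0:ℝ) t, (1+t-s)^(-lam) = ∫ s in Set.Icc (0:ℝ) t, (1+s)^(-lam) := by
  rw [MeasureTheory.integral_Icc_eq_integral_Ioc, ← intervalIntegral.integral_of_le ht,
      MeasureTheory.integral_Icc_eq_integral_Ioc, ← intervalIntegral.integral_of_le ht]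
  rw [show (fun s : ℝ => (1+t-s)^(-lam)) = (fun s => (fun x : ℝ => (1+x) ^ (-lam)) (t - s)) by
        funext s; simp; ring_nf]
  rw [intervalIntegral.integral_comp_sub_left (fun x : ℝ => (1+x) ^ (-lam)) t]
  norm_num


lemma two_rpow_pos (α : ℝ) : (0:ℝ) < 2 ^ α := Real.rpow_pos_of_pos two_pos α

lemma pointwise (t lam mu s : ℝ) (hl : 0 ≤ lam) (hm : 0 ≤ mu) (hs : s ∈ Icc (0:ℝ) t) :
    (1+t-s)^(-lam)*(1+s)^(-mu) ≤
      2^lam*(1+t)^(-lam)*(1+s)^(-mu) + 2^mu*(1+t)^(-mu)*(1+t-s)^(-lam) := by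
  obtain ⟨hs0, hst⟩ := hs
  have ht : 0 ≤ t := le_trans hs0 hst
  have h1 : (0:ℝ) < 1 + t := by linarith
  have h2 : (0:ℝ) < 1 + s := by linarith
  have h3 : (0:ℝ) < 1 + t - s := by linarith
  have key : ∀ x : ℝ, (1+t)/2 ≤ x → 0 < x → ∀ α : ℝ, 0 ≤ α →
      x ^ (-α) ≤ 2^α * (1+t)^(-α) := by
    intro x hx hx0 α hα
    have : x ^ (-α) ≤ ((1+t)/2) ^ (-α) :=
      Real.rpow_le_rpow_of_nonpos (by linarith) hx (by linarith)
    refine this.trans_eq ?_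
    rw [Real.div_rpow (by linarith) (by norm_num), Real.rpow_neg (by linarith),
        Real.rpow_neg (by norm_num)]
    field_simp
  rcases le_total s (t/2) with hc | hc
  · have hA : (1+t-s) ^ (-lam) ≤ 2^lam * (1+t)^(-lam) :=
      key _ (by linarith) h3 lam hl
    have : (1+t-s)^(-lam)*(1+s)^(-mu) ≤ 2^lam*(1+t)^(-lam)*(1+s)^(-mu) :=
      mul_le_mul_of_nonneg_right hA (Real.rpow_nonneg h2.le _)
    refine this.trans (le_add_of_nonneg_right ?_)
    positivity
  · have hA : (1+s) ^ (-mu) ≤ 2^mu * (1+t)^(-mu) :=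
      key _ (by linarith) h2 mu hm
    have : (1+t-s)^(-lam)*(1+s)^(-mu) ≤ 2^mu*(1+t)^(-mu)*(1+t-s)^(-lam) := by
      rw [mul_comm]
      exact mul_le_mul_of_nonneg_right hA (Real.rpow_nonneg h3.le _)
    refine this.trans (le_add_of_nonneg_left ?_)
    positivity

lemma logtrick (ε t : ℝ) (hε : 0 < ε) (ht : 0 ≤ t) :
    Real.log (2+t) ≤ 2^ε/ε * (1+t)^ε := by
  have h2 : (0:ℝ) < 2 + t := by linarith
  have h1 : (0:ℝ) < 1 + t := by linarith
  have e1 : Real.log (2+t) = (1/ε) * Real.log ((2+t)^ε) := by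
    rw [Real.log_rpow h2]; field_simp
  have e2 : Real.log ((2+t)^ε) ≤ (2+t)^ε := by
    have := Real.log_le_sub_one_of_pos (Real.rpow_pos_of_pos h2 ε)
    linarith
  have e3 : (2+t)^ε ≤ 2^ε * (1+t)^ε := by
    rw [← Real.mul_rpow (by norm_num) h1.le]
    exact Real.rpow_le_rpow h2.le (by linarith) hε.le
  rw [e1, one_div, inv_mul_eq_div, div_mul_eq_mul_div, div_le_div_iff₀ hε hε]
  calc Real.log ((2+t)^ε) * ε ≤ (2^ε * (1+t)^ε) * ε :=
        mul_le_mul_of_nonneg_right (e2.trans e3) hε.le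


lemma integ3 (t lam : ℝ) : IntegrableOn (fun s => (1+t-s)^(-lam)) (Set.Icc (0:ℝ) t) := by
  apply ContinuousOn.integrableOn_compact isCompact_Icc
  apply ContinuousOn.rpow_const (by fun_prop)
  intro x hx; left; have := hx.2; nlinarith

lemma master (t lam mu : ℝ) (ht : 0 ≤ t) (hl : 0 ≤ lam) (hm : 0 ≤ mu) :
    (∫ s in Icc (0:ℝ) t, (1+t-s)^(-lam) * (1+s)^(-mu)) ≤
      2^lam*(1+t)^(-lam) * (∫ s in Icc (0:ℝ) t, (1+s)^(-mu)) +
      2^mu*(1+t)^(-mu) * (∫ s in Icc (0:ℝ) t, (1+s)^(-lam)) := by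
  have hint : IntegrableOn
      (fun s => 2^lam*(1+t)^(-lam)*(1+s)^(-mu) + 2^mu*(1+t)^(-mu)*(1+t-s)^(-lam))
      (Icc (0:ℝ) t) := by
    apply Integrable.add
    · exact ((integ1 t mu).const_mul _)
    · exact ((integ3 t lam).const_mul _)
  calc (∫ s in Icc (0:ℝ) t, (1+t-s)^(-lam) * (1+s)^(-mu))
      ≤ ∫ s in Icc (0:ℝ) t,
          (2^lam*(1+t)^(-lam)*(1+s)^(-mu) + 2^mu*(1+t)^(-mu)*(1+t-s)^(-lam)) :=
        setIntegral_mono_on (integ2 t lam mu) hint measurableSet_Icc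
          (fun s hs => pointwise t lam mu s hl hm hs)
    _ = 2^lam*(1+t)^(-lam) * (∫ s in Icc (0:ℝ) t, (1+s)^(-mu)) +
        2^mu*(1+t)^(-mu) * (∫ s in Icc (0:ℝ) t, (1+t-s)^(-lam)) := by
        rw [integral_add ((integ1 t mu).const_mul _) ((integ3 t lam).const_mul _),
            MeasureTheory.integral_const_mul, MeasureTheory.integral_const_mul]
    _ = _ := by rw [reflect t lam ht]


lemma finish (t ρ a b c d E X Y : ℝ) (ht : 0 ≤ t)
    (h1 : X ≤ c*(1+t)^a) (h2 : Y ≤ d*(1+t)^b)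
    (ha : a ≤ -ρ) (hb : b ≤ -ρ) (hc : 0 ≤ c) (hd : 0 ≤ d) (hE : c + d ≤ E) :
    X + Y ≤ E*(1+t)^(-ρ) := by
  have h1t : (1:ℝ) ≤ 1 + t := by linarith
  have h1' : X ≤ c*(1+t)^(-ρ) :=
    h1.trans (mul_le_mul_of_nonneg_left (Real.rpow_le_rpow_of_exponent_le h1t ha) hc)
  have h2' : Y ≤ d*(1+t)^(-ρ) :=
    h2.trans (mul_le_mul_of_nonneg_left (Real.rpow_le_rpow_of_exponent_le h1t hb) hd)
  have hnn : (0:ℝ) ≤ (1+t)^(-ρ) := Real.rpow_nonneg (by linarith) _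
  nlinarith [mul_le_mul_of_nonneg_right hE hnn]

lemma termA_lt (α β t : ℝ) (ht : 0 ≤ t) (hβ0 : 0 ≤ β) (hβ : β < 1) :
    2^α*(1+t)^(-α) * (∫ s in Icc (0:ℝ) t, (1+s)^(-β)) ≤
      (2^α/(1-β)) * (1+t)^(1-β-α) := by
  have h1 : (0:ℝ) < 1 + t := by linarith
  have hI : (∫ s in Icc (0:ℝ) t, (1+s)^(-β)) ≤ (1+t)^(1-β)/(1-β) := by
    rw [int_eq t β ht (by linarith)]
    exact div_le_div_of_nonneg_right (by linarith [Real.rpow_nonneg h1.le (1-β)]) (by linarith) |>.trans_eq rfl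
  calc 2^α*(1+t)^(-α) * (∫ s in Icc (0:ℝ) t, (1+s)^(-β))
      ≤ 2^α*(1+t)^(-α) * ((1+t)^(1-β)/(1-β)) := by
        apply mul_le_mul_of_nonneg_left hI
        positivity
    _ = (2^α/(1-β)) * ((1+t)^(-α) * (1+t)^(1-β)) := by ring
    _ = (2^α/(1-β)) * (1+t)^(1-β-α) := by
        rw [← Real.rpow_add h1]; ring_nf

lemma termA_gt (α β t : ℝ) (ht : 0 ≤ t) (hβ : 1 < β) :
    2^α*(1+t)^(-α) * (∫ s in Icc (0:ℝ) t, (1+s)^(-β)) ≤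
      (2^α/(β-1)) * (1+t)^(-α) := by
  have h1 : (0:ℝ) < 1 + t := by linarith
  have hI : (∫ s in Icc (0:ℝ) t, (1+s)^(-β)) ≤ 1/(β-1) := by
    rw [int_eq t β ht (by linarith)]
    rw [div_le_iff_of_neg (by linarith : 1-β < 0)]
    have hne : β - 1 ≠ 0 := ne_of_gt (by linarith)
    have he : 1/(β-1)*(1-β) = -1 := by field_simp; ring
    rw [he]
    have := Real.rpow_nonneg h1.le (1-β)
    linarith
  calc 2^α*(1+t)^(-α) * (∫ s in Icc (0:ℝ) t, (1+s)^(-β))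
      ≤ 2^α*(1+t)^(-α) * (1/(β-1)) := by
        apply mul_le_mul_of_nonneg_left hI
        positivity
    _ = (2^α/(β-1)) * (1+t)^(-α) := by ring

lemma termA_log (α t : ℝ) (ht : 0 ≤ t) :
    2^α*(1+t)^(-α) * (∫ s in Icc (0:ℝ) t, (1+s)^(-(1:ℝ))) ≤
      (2^α * Real.log (2+t)) * (1+t)^(-α) := by
  have h1 : (0:ℝ) < 1 + t := by linarith
  have hI : (∫ s in Icc (0:ℝ) t, (1+s)^(-(1:ℝ))) ≤ Real.log (2+t) := by
    rw [int_eq_log t ht]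
    exact Real.log_le_log (by linarith) (by linarith)
  calc 2^α*(1+t)^(-α) * (∫ s in Icc (0:ℝ) t, (1+s)^(-(1:ℝ)))
      ≤ 2^α*(1+t)^(-α) * Real.log (2+t) := by
        apply mul_le_mul_of_nonneg_left hI
        positivity
    _ = (2^α * Real.log (2+t)) * (1+t)^(-α) := by ring

lemma termA_log' (α ε t : ℝ) (hε : 0 < ε) (ht : 0 ≤ t) :
    2^α*(1+t)^(-α) * (∫ s in Icc (0:ℝ) t, (1+s)^(-(1:ℝ))) ≤
      (2^α * (2^ε/ε)) * (1+t)^(ε-α) := by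
  have h1 : (0:ℝ) < 1 + t := by linarith
  refine (termA_log α t ht).trans ?_
  calc (2^α * Real.log (2+t)) * (1+t)^(-α)
      ≤ (2^α * (2^ε/ε * (1+t)^ε)) * (1+t)^(-α) := by
        apply mul_le_mul_of_nonneg_right
        · apply mul_le_mul_of_nonneg_left (logtrick ε t hε ht)
          positivity
        · positivity
    _ = (2^α * (2^ε/ε)) * ((1+t)^ε * (1+t)^(-α)) := by ring
    _ = (2^α * (2^ε/ε)) * (1+t)^(ε-α) := by
        rw [← Real.rpow_add h1]; ring_nf


lemma two_rpow_pos' (α : ℝ) : (0:ℝ) < 2 ^ α := Real.rpow_pos_of_pos two_pos α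

lemma log_ge_half (t : ℝ) (ht : 0 ≤ t) : (1:ℝ)/2 ≤ Real.log (2+t) := by
  have h2 : Real.log 2 ≤ Real.log (2+t) := Real.log_le_log (by norm_num) (by linarith)
  have := Real.log_two_gt_d9
  linarith


end helpers

section main
open Real Set

/-- **Basic decay estimate** (Proposition `BasicDecay`):
`∫₀^t (1+t−s)^{−λ}(1+s)^{−μ} ds ≤ C_{λ,μ}(t) (1+t)^{−ρ}` with
`ρ = min{λ+μ−1, μ}` and `C_{λ,μ}(t) = C` if `λ ≠ 1`, `C log(2+t)` if `λ = 1`. -/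
theorem basic_decay (lam mu : ℝ) (hmu : 0 ≤ mu) (hlm : mu ≤ lam) :
    ∃ C : ℝ, 0 < C ∧ ∀ t : ℝ, 0 ≤ t →
      (∫ s in Set.Icc (0:ℝ) t, (1 + t - s) ^ (-lam) * (1 + s) ^ (-mu)) ≤
        (if lam = 1 then C * Real.log (2 + t) else C) * (1 + t) ^ (-min (lam + mu - 1) mu) := by
  have hl0 : 0 ≤ lam := hmu.trans hlm
  by_cases hl1 : lam = 1
  · subst hl1
    simp only [if_pos rfl]
    rcases eq_or_lt_of_le hlm with he | hlt
    · subst he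
      refine ⟨4, by norm_num, fun t ht => ?_⟩
      have hmin : min ((1:ℝ)+1-1) 1 = 1 := by norm_num
      rw [hmin]
      have hlog : (0:ℝ) ≤ Real.log (2+t) := Real.log_nonneg (by linarith)
      refine (master t 1 1 ht zero_le_one zero_le_one).trans ?_
      refine finish t 1 (-1) (-1) (2^(1:ℝ)*Real.log (2+t)) (2^(1:ℝ)*Real.log (2+t))
        (4*Real.log (2+t)) _ _ ht (termA_log 1 t ht) (termA_log 1 t ht)
        le_rfl le_rfl (mul_nonneg (two_rpow_pos' 1).le hlog)
        (mul_nonneg (two_rpow_pos' 1).le hlog) ?_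
      rw [Real.rpow_one]
      linarith
    · refine ⟨4/(1-mu) + 2, add_pos (div_pos four_pos (by linarith)) two_pos, fun t ht => ?_⟩
      have hmin : min ((1:ℝ)+mu-1) mu = mu := by
        rw [show (1:ℝ)+mu-1 = mu by ring, min_self]
      rw [hmin]
      have hlog := log_ge_half t ht
      refine (master t 1 mu ht zero_le_one hmu).trans ?_
      refine finish t mu (1-mu-1) (-mu) (2^(1:ℝ)/(1-mu)) (2^mu*Real.log (2+t))
        ((4/(1-mu)+2)*Real.log (2+t)) _ _ ht (termA_lt 1 mu t ht hmu hlt)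
        (termA_log mu t ht) (by linarith) le_rfl
        (div_nonneg (two_rpow_pos' 1).le (by linarith))
        (mul_nonneg (two_rpow_pos' mu).le (by linarith)) ?_
      have h2m : (2:ℝ)^mu ≤ 2^(1:ℝ) :=
        Real.rpow_le_rpow_of_exponent_le one_le_two hlt.le
      rw [Real.rpow_one] at *
      have hd : (0:ℝ) < 4/(1-mu) := div_pos four_pos (by linarith)
      have e1 : 2^mu * Real.log (2+t) ≤ 2 * Real.log (2+t) :=
        mul_le_mul_of_nonneg_right h2m (by linarith)
      have e2 : 4/(1-mu) * (1/2) ≤ 4/(1-mu) * Real.log (2+t) :=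
        mul_le_mul_of_nonneg_left hlog hd.le
      have e3 : 4/(1-mu)*(1/2) = 2/(1-mu) := by ring
      linarith
  · simp only [if_neg hl1]
    rcases lt_or_gt_of_ne hl1 with hlt | hgt
    · -- lam < 1
      have hmu1 : mu < 1 := lt_of_le_of_lt hlm hlt
      have hmin : min (lam+mu-1) mu = lam+mu-1 := min_eq_left (by linarith)
      refine ⟨2^lam/(1-mu) + 2^mu/(1-lam), ?_, fun t ht => ?_⟩
      · exact add_pos (div_pos (two_rpow_pos' lam) (by linarith))
          (div_pos (two_rpow_pos' mu) (by linarith))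
      rw [hmin]
      refine (master t lam mu ht hl0 hmu).trans ?_
      exact finish t (lam+mu-1) (1-mu-lam) (1-lam-mu) (2^lam/(1-mu)) (2^mu/(1-lam)) _ _ _ ht
        (termA_lt lam mu t ht hmu hmu1) (termA_lt mu lam t ht hl0 hlt)
        (by linarith) (by linarith)
        (div_nonneg (two_rpow_pos' lam).le (by linarith))
        (div_nonneg (two_rpow_pos' mu).le (by linarith)) le_rfl
    · -- 1 < lam
      have hmin : min (lam+mu-1) mu = mu := min_eq_right (by linarith)
      rcases lt_trichotomy mu 1 with hm1 | hm1 | hm1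
      · refine ⟨2^lam/(1-mu) + 2^mu/(lam-1), ?_, fun t ht => ?_⟩
        · exact add_pos (div_pos (two_rpow_pos' lam) (by linarith))
            (div_pos (two_rpow_pos' mu) (by linarith))
        rw [hmin]
        refine (master t lam mu ht hl0 hmu).trans ?_
        exact finish t mu (1-mu-lam) (-mu) (2^lam/(1-mu)) (2^mu/(lam-1)) _ _ _ ht
          (termA_lt lam mu t ht hmu hm1) (termA_gt mu lam t ht hgt)
          (by linarith) le_rfl
          (div_nonneg (two_rpow_pos' lam).le (by linarith))
          (div_nonneg (two_rpow_pos' mu).le (by linarith)) le_rfl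
      · subst hm1
        refine ⟨2^lam*(2^(lam-1)/(lam-1)) + 2^(1:ℝ)/(lam-1), ?_, fun t ht => ?_⟩
        · exact add_pos (mul_pos (two_rpow_pos' lam)
            (div_pos (two_rpow_pos' (lam-1)) (by linarith)))
            (div_pos (two_rpow_pos' 1) (by linarith))
        have hmin' : min (lam+1-1) 1 = 1 := by
          rw [show lam+1-1 = lam by ring]; exact min_eq_right (by linarith)
        rw [hmin']
        refine (master t lam 1 ht hl0 zero_le_one).trans ?_
        exact finish t 1 (lam-1-lam) (-1) (2^lam*(2^(lam-1)/(lam-1))) (2^(1:ℝ)/(lam-1)) _ _ _ ht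
          (termA_log' lam (lam-1) t (by linarith) ht) (termA_gt 1 lam t ht hgt)
          (by linarith) le_rfl
          (mul_nonneg (two_rpow_pos' lam).le
            (div_nonneg (two_rpow_pos' (lam-1)).le (by linarith)))
          (div_nonneg (two_rpow_pos' 1).le (by linarith)) le_rfl
      · refine ⟨2^lam/(mu-1) + 2^mu/(lam-1), ?_, fun t ht => ?_⟩
        · exact add_pos (div_pos (two_rpow_pos' lam) (by linarith))
            (div_pos (two_rpow_pos' mu) (by linarith))
        rw [hmin]
        refine (master t lam mu ht hl0 hmu).trans ?_
        exact finish t mu (-lam) (-mu) (2^lam/(mu-1)) (2^mu/(lam-1)) _ _ _ ht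
          (termA_gt lam mu t ht hm1) (termA_gt mu lam t ht hgt)
          (by linarith) le_rfl
          (div_nonneg (two_rpow_pos' lam).le (by linarith))
          (div_nonneg (two_rpow_pos' mu).le (by linarith)) le_rfl

end main
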